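/- Let (Z_t) satisfy Z_t = μ + V_t with μ ≠ 0, where n^{-1/2} Σ_{t=1}^{⌊n·⌋} V_t ⇒ σB(·) in D([0,1],ℝ) with σ > 0. Then the self-normalized statistic Q_n = n Z̄_n² / R_n² diverges to ∞ in probability: for every M > 0, P(Q_n > M) → 1. -/

import Mathlib

open MeasureTheory Filter Set
open scoped UniformConvergence Topology ENNReal NNReal

noncomputable section

/-- Convergence in distribution of `E`-valued random elements, tested against
bounded continuous functions. -/
def TendstoInDist {Ω Ω' E : Type*} [MeasurableSpace Ω] [MeasurableSpace Ω']
    [TopologicalSpace E] (μ : Measure Ω) (ν : Measure Ω')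
    (X : ℕ → Ω → E) (Y : Ω' → E) : Prop :=
  ∀ f : BoundedContinuousFunction E ℝ,
    Tendsto (fun n => ∫ ω, f (X n ω) ∂μ) atTop (𝓝 (∫ ω, f (Y ω) ∂ν))

/-- A standard one-dimensional Brownian motion: starts at `0`, has continuous
sample paths, Gaussian increments with variance equal to the time increment,
and independent increments over disjoint intervals. -/
structure IsBrownianMotion {Ω : Type*} [MeasurableSpace Ω] (μ : Measure Ω)
    (B : ℝ → Ω → ℝ) : Prop where
  meas : ∀ t, Measurable (B t)
  init : ∀ᵐ ω ∂μ, B 0 ω = 0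
  cont : ∀ᵐ ω ∂μ, Continuous fun t => B t ω
  gauss : ∀ s t : ℝ, 0 ≤ s → s ≤ t →
    Measure.map (fun ω => B t ω - B s ω) μ =
      ProbabilityTheory.gaussianReal 0 (Real.toNNReal (t - s))
  indep : ∀ s t u v : ℝ, 0 ≤ s → s ≤ t → t ≤ u → u ≤ v →
    ProbabilityTheory.IndepFun (fun ω => B t ω - B s ω)
      (fun ω => B v ω - B u ω) μ

/-- Path space: functions on `[0,1]` with the uniform topology. -/
abbrev PathR := Set.Icc (0:ℝ) 1 →ᵤ ℝ

variable {Ω : Type*}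

/-- Sample mean `Z̄_n = n⁻¹ Σ_{t=1}^n Z_t`. -/
def sampleMean (Z : ℕ → Ω → ℝ) (n : ℕ) (ω : Ω) : ℝ :=
  (∑ t ∈ Finset.Icc 1 n, Z t ω) / n

/-- Normalized partial sum process `S_n(r) = n^{-1/2} Σ_{t=1}^{⌊nr⌋} Z_t`. -/
def partialSumProc (Z : ℕ → Ω → ℝ) (n : ℕ) (ω : Ω) : PathR :=
  UniformFun.ofFun fun r : Set.Icc (0:ℝ) 1 =>
    (∑ t ∈ Finset.Icc 1 ⌊(n : ℝ) * (r : ℝ)⌋₊, Z t ω) / Real.sqrt n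

/-- Centered CUSUM process `T_n(r) = n^{-1/2} Σ_{t=1}^{⌊nr⌋} (Z_t − Z̄_n)`. -/
def cusum (Z : ℕ → Ω → ℝ) (n : ℕ) (ω : Ω) (r : ℝ) : ℝ :=
  (∑ t ∈ Finset.Icc 1 ⌊(n : ℝ) * r⌋₊, (Z t ω - sampleMean Z n ω)) / Real.sqrt n

/-- Adjusted range `R_n = sup_{0≤r≤1} T_n(r) − inf_{0≤r≤1} T_n(r)`. -/
def adjRange (Z : ℕ → Ω → ℝ) (n : ℕ) (ω : Ω) : ℝ :=
  sSup (cusum Z n ω '' Set.Icc (0:ℝ) 1) - sInf (cusum Z n ω '' Set.Icc (0:ℝ) 1)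

/-- Self-normalized statistic `Q_n = n Z̄_n² / R_n²`. -/
def Qstat (Z : ℕ → Ω → ℝ) (n : ℕ) (ω : Ω) : ℝ :=
  n * (sampleMean Z n ω) ^ 2 / (adjRange Z n ω) ^ 2

/-- Adjusted range of the Brownian bridge `𝔹(r) = B(r) − r B(1)` over `[0,1]`. -/
def bridgeRange (B : ℝ → Ω → ℝ) (ω : Ω) : ℝ :=
  sSup ((fun r : ℝ => B r ω - r * B 1 ω) '' Set.Icc (0:ℝ) 1) -
    sInf ((fun r : ℝ => B r ω - r * B 1 ω) '' Set.Icc (0:ℝ) 1)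

namespace Stmt8Aux

/-- index `1` in the unit interval -/
def oneI : Set.Icc (0:ℝ) 1 := ⟨1, by norm_num⟩
def zeroI : Set.Icc (0:ℝ) 1 := ⟨0, by norm_num⟩
def halfI : Set.Icc (0:ℝ) 1 := ⟨1/2, by norm_num⟩

lemma lip_min (a b c : ℝ) : |min a c - min b c| ≤ |a - b| := by
  rcases le_total a c with h1 | h1 <;> rcases le_total b c with h2 | h2 <;>
    simp [min_eq_left, min_eq_right, h1, h2, abs_le] <;>
    rcases abs_le.1 (le_refl |a - b|) with ⟨hl, hr⟩ <;>
    constructor <;> nlinarith [abs_nonneg (a - b), le_abs_self (a-b), neg_abs_le (a-b)]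

lemma csSup_le_csSup_add {α : Type*} {S : Set α} (hS : S.Nonempty) (g h : α → ℝ) {c : ℝ}
    (hb : BddAbove (h '' S)) (hgh : ∀ a ∈ S, g a ≤ h a + c) :
    sSup (g '' S) ≤ sSup (h '' S) + c := by
  refine csSup_le (hS.image g) ?_
  rintro y ⟨a, ha, rfl⟩
  exact le_trans (hgh a ha) (add_le_add_left (le_csSup hb ⟨a, ha, rfl⟩) c)

lemma abs_csSup_sub_csSup_le {α : Type*} {S : Set α} (hS : S.Nonempty) (g h : α → ℝ) {c : ℝ}
    (hbg : BddAbove (g '' S)) (hbh : BddAbove (h '' S))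
    (hgh : ∀ a ∈ S, |g a - h a| ≤ c) :
    |sSup (g '' S) - sSup (h '' S)| ≤ c := by
  rw [abs_sub_le_iff]
  constructor
  · have := csSup_le_csSup_add hS g h hbh (fun a ha => by
      have := (abs_le.1 (hgh a ha)).2; linarith)
    linarith
  · have := csSup_le_csSup_add hS h g hbg (fun a ha => by
      have := (abs_le.1 (hgh a ha)).1; linarith)
    linarith

/-- A functional on path space which is Lipschitz for the sup distance is continuous. -/
lemma continuous_of_unifLip (F : PathR → ℝ) (C : ℝ) (hC : 0 < C)
    (h : ∀ η : ℝ, 0 < η → ∀ x y : PathR,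
      (∀ r, |UniformFun.toFun x r - UniformFun.toFun y r| ≤ η) → |F x - F y| ≤ C * η) :
    Continuous F := by
  refine UniformContinuous.continuous ?_
  rw [UniformContinuous]
  refine ((UniformFun.hasBasis_uniformity (Set.Icc (0:ℝ) 1) ℝ).tendsto_iff
    Metric.uniformity_basis_dist).2 ?_
  intro ε hε
  refine ⟨{p : ℝ × ℝ | dist p.1 p.2 < ε / (2 * C)}, Metric.dist_mem_uniformity (by positivity), ?_⟩
  rintro ⟨x, y⟩ hxy
  have hb : |F x - F y| ≤ C * (ε / (2 * C)) := by
    refine h _ (by positivity) x y fun r => ?_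
    have := hxy r
    simp only [Set.mem_setOf_eq, Real.dist_eq] at this
    exact le_of_lt this
  have heq : C * (ε / (2 * C)) = ε / 2 := by field_simp
  simp only [Set.mem_setOf_eq, Real.dist_eq]
  calc |F x - F y| ≤ ε / 2 := by rw [← heq]; exact hb
    _ < ε := by linarith

/-- enumeration of a dense subset of the unit interval -/
def clampI (y : ℝ) : Set.Icc (0:ℝ) 1 :=
  ⟨max 0 (min 1 y), by
    constructor
    · exact le_max_left _ _
    · exact max_le (by norm_num) (min_le_left _ _)⟩

lemma dist_clampI (x : Set.Icc (0:ℝ) 1) (y : ℝ) : dist x (clampI y) ≤ dist (x:ℝ) y := by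
  obtain ⟨x, hx0, hx1⟩ := x
  rw [Subtype.dist_eq, Real.dist_eq, Real.dist_eq]
  show |x - max 0 (min 1 y)| ≤ _
  rcases le_total y 0 with h | h
  · rw [min_eq_right (le_trans h (by norm_num)), max_eq_left h, sub_zero, abs_of_nonneg hx0]
    calc x ≤ x - y := by linarith
      _ ≤ |x - y| := le_abs_self _
  · rcases le_total (1:ℝ) y with h2 | h2
    · rw [min_eq_left h2, max_eq_right (by norm_num), abs_of_nonpos (by linarith)]
      calc -(x - 1) = 1 - x := by ring
        _ ≤ y - x := by linarith
        _ ≤ |x - y| := by rw [abs_sub_comm]; exact le_abs_self _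
    · rw [min_eq_right h2, max_eq_right h]

def eI (j : ℕ) : Set.Icc (0:ℝ) 1 := clampI ((Denumerable.ofNat ℚ j : ℚ) : ℝ)

lemma denseRange_eI : DenseRange eI := by
  rw [Metric.denseRange_iff]
  intro x ε hε
  obtain ⟨q, hq⟩ := Metric.denseRange_iff.1 (Rat.denseRange_cast (𝕜 := ℝ)) (x:ℝ) ε hε
  obtain ⟨j, hj⟩ : ∃ j, Denumerable.ofNat ℚ j = q := ⟨_, Denumerable.ofNat_encode q⟩
  refine ⟨j, ?_⟩
  have h1 : eI j = clampI ((q:ℚ):ℝ) := by unfold eI; rw [hj]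
  rw [h1]
  exact lt_of_le_of_lt (dist_clampI x (q:ℝ)) hq

/-- sSup over the whole space equals countable sup over a dense family,
for continuous bounded functions. -/
lemma sSup_image_univ_eq_ciSup {κ : Type*} [TopologicalSpace κ]
    {ι : Type*} [Nonempty ι] (d : ι → κ) (hd : DenseRange d) (g : κ → ℝ)
    (hg : Continuous g) (C : ℝ) (hC : ∀ a, g a ≤ C) :
    sSup (g '' Set.univ) = ⨆ i, g (d i) := by
  have hbdd : BddAbove (Set.range fun i => g (d i)) := ⟨C, by rintro y ⟨i, rfl⟩; exact hC _⟩
  have hne : Nonempty κ := ⟨d (Classical.arbitrary ι)⟩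
  refine le_antisymm ?_ ?_
  · refine csSup_le (by simpa using Set.univ_nonempty.image g) ?_
    rintro y ⟨a, -, rfl⟩
    -- g a belongs to closure of range (g ∘ d)
    have hmem : g a ∈ closure (Set.range fun i => g (d i)) := by
      have h1 : a ∈ closure (Set.range d) := hd a
      have h2 : g a ∈ g '' closure (Set.range d) := ⟨a, h1, rfl⟩
      have h3 : g '' closure (Set.range d) ⊆ closure (g '' Set.range d) :=
        image_closure_subset_closure_image hg
      have h4 : g '' Set.range d = Set.range fun i => g (d i) := by
        ext y; simp [Set.mem_image, Set.mem_range]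
      rw [← h4]; exact h3 h2
    have hclosed : closure (Set.range fun i => g (d i)) ⊆
        {y : ℝ | y ≤ ⨆ i, g (d i)} := by
      refine closure_minimal ?_ (isClosed_le continuous_id continuous_const)
      rintro y ⟨i, rfl⟩
      exact le_ciSup hbdd i
    exact hclosed hmem
  · refine ciSup_le fun i => le_csSup ⟨C, ?_⟩ ⟨d i, trivial, rfl⟩
    rintro y ⟨a, -, rfl⟩; exact hC _


instance : Nonempty (Set.Icc (0:ℝ) 1) := ⟨zeroI⟩

/-- clamped sup functional -/
def NN (K : ℝ) (x : PathR) : ℝ :=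
  sSup ((fun r : Set.Icc (0:ℝ) 1 => min |UniformFun.toFun x r| (K + 2)) '' Set.univ)

lemma NN_bddAbove (K : ℝ) (x : PathR) :
    BddAbove ((fun r : Set.Icc (0:ℝ) 1 => min |UniformFun.toFun x r| (K + 2)) '' Set.univ) :=
  ⟨K + 2, by rintro y ⟨r, -, rfl⟩; exact min_le_right _ _⟩

lemma NN_le {K : ℝ} {x : PathR} (h : ∀ r, |UniformFun.toFun x r| ≤ K) : NN K x ≤ K := by
  refine csSup_le (Set.univ_nonempty.image _) ?_
  rintro y ⟨r, -, rfl⟩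
  exact le_trans (min_le_left _ _) (h r)

lemma lt_of_NN_lt {K : ℝ} {x : PathR} (h : NN K x < K + 1) :
    ∀ r, |UniformFun.toFun x r| < K + 1 := by
  intro r
  by_contra hc
  push_neg at hc
  have h1 : min |UniformFun.toFun x r| (K + 2) ≤ NN K x :=
    le_csSup (NN_bddAbove K x) ⟨r, trivial, rfl⟩
  have h2 : K + 1 ≤ min |UniformFun.toFun x r| (K + 2) := le_min hc (by linarith)
  linarith

lemma continuous_NN (K : ℝ) : Continuous (NN K) := by
  refine continuous_of_unifLip _ 1 one_pos ?_
  intro η hη x y hxy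
  rw [one_mul]
  refine abs_csSup_sub_csSup_le Set.univ_nonempty _ _ (NN_bddAbove K x) (NN_bddAbove K y) ?_
  intro r _
  refine le_trans (lip_min _ _ _) (le_trans (abs_abs_sub_abs_le_abs_sub _ _) (hxy r))

/-- bridge-difference functional -/
def bdiff (x : PathR) (p : (Set.Icc (0:ℝ) 1) × (Set.Icc (0:ℝ) 1)) : ℝ :=
  (UniformFun.toFun x p.1 - (p.1 : ℝ) * UniformFun.toFun x oneI) -
    (UniformFun.toFun x p.2 - (p.2 : ℝ) * UniformFun.toFun x oneI)

def HH (x : PathR) : ℝ := sSup ((fun p => min (bdiff x p) 1) '' Set.univ)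

lemma HH_bddAbove (x : PathR) : BddAbove ((fun p => min (bdiff x p) 1) '' Set.univ) :=
  ⟨1, by rintro y ⟨p, -, rfl⟩; exact min_le_right _ _⟩

lemma min_bdiff_le_HH (x : PathR) (p) : min (bdiff x p) 1 ≤ HH x :=
  le_csSup (HH_bddAbove x) ⟨p, trivial, rfl⟩

lemma exists_of_lt_HH {x : PathR} {δ : ℝ} (h : δ < HH x) : ∃ p, δ < bdiff x p := by
  obtain ⟨y, ⟨p, -, rfl⟩, hy⟩ := exists_lt_of_lt_csSup (Set.univ_nonempty.image _) h
  exact ⟨p, lt_of_lt_of_le hy (min_le_left _ _)⟩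

lemma continuous_HH : Continuous HH := by
  refine continuous_of_unifLip _ 4 (by norm_num) ?_
  intro η hη x y hxy
  refine abs_csSup_sub_csSup_le Set.univ_nonempty _ _ (HH_bddAbove x) (HH_bddAbove y) ?_
  intro p _
  refine le_trans (lip_min _ _ _) ?_
  have key : bdiff x p - bdiff y p =
      (UniformFun.toFun x p.1 - UniformFun.toFun y p.1)
      - (UniformFun.toFun x p.2 - UniformFun.toFun y p.2)
      - (p.1 : ℝ) * (UniformFun.toFun x oneI - UniformFun.toFun y oneI)
      + (p.2 : ℝ) * (UniformFun.toFun x oneI - UniformFun.toFun y oneI) := by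
    unfold bdiff; ring
  have e1 := hxy p.1
  have e2 := hxy p.2
  have e3 := hxy oneI
  have hp1 : |(p.1 : ℝ)| ≤ 1 := abs_le.2 ⟨by linarith [p.1.2.1], p.1.2.2⟩
  have hp2 : |(p.2 : ℝ)| ≤ 1 := abs_le.2 ⟨by linarith [p.2.2.1], p.2.2.2⟩
  have hm1 : |(p.1 : ℝ) * (UniformFun.toFun x oneI - UniformFun.toFun y oneI)| ≤ η := by
    rw [abs_mul]
    calc |(p.1:ℝ)| * |UniformFun.toFun x oneI - UniformFun.toFun y oneI|
        ≤ 1 * η := mul_le_mul hp1 e3 (abs_nonneg _) one_pos.le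
      _ = η := one_mul _
  have hm2 : |(p.2 : ℝ) * (UniformFun.toFun x oneI - UniformFun.toFun y oneI)| ≤ η := by
    rw [abs_mul]
    calc |(p.2:ℝ)| * |UniformFun.toFun x oneI - UniformFun.toFun y oneI|
        ≤ 1 * η := mul_le_mul hp2 e3 (abs_nonneg _) one_pos.le
      _ = η := one_mul _
  rw [key]
  have a1 := abs_le.1 e1
  have a2 := abs_le.1 e2
  have a3 := abs_le.1 hm1
  have a4 := abs_le.1 hm2
  refine abs_le.2 ⟨by linarith, by linarith⟩

def phi01 (t : ℝ) : ℝ := min 1 (max 0 t)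

lemma phi01_nonneg (t : ℝ) : 0 ≤ phi01 t := le_min (by norm_num) (le_max_left _ _)

lemma phi01_le_one (t : ℝ) : phi01 t ≤ 1 := min_le_left _ _

lemma continuous_phi01 : Continuous phi01 :=
  continuous_const.min (continuous_const.max continuous_id)

lemma phi01_eq_one {t : ℝ} (h : 1 ≤ t) : phi01 t = 1 := by
  unfold phi01
  rw [max_eq_right (by linarith), min_eq_left h]

lemma pos_of_phi01_pos {t : ℝ} (h : 0 < phi01 t) : 0 < t := by
  by_contra hc
  push_neg at hc
  have : phi01 t = 0 := by unfold phi01; rw [max_eq_left hc]; simp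
  rw [this] at h; exact lt_irrefl 0 h

/-- the test functional -/
def gF (K δ : ℝ) (x : PathR) : ℝ := phi01 (K + 1 - NN K x) * phi01 ((HH x - δ) / δ)

lemma gF_nonneg (K δ : ℝ) (x : PathR) : 0 ≤ gF K δ x :=
  mul_nonneg (phi01_nonneg _) (phi01_nonneg _)

lemma gF_le_one (K δ : ℝ) (x : PathR) : gF K δ x ≤ 1 :=
  mul_le_one₀ (phi01_le_one _) (phi01_nonneg _) (phi01_le_one _)

lemma continuous_gF (K δ : ℝ) : Continuous (gF K δ) := by
  unfold gF
  exact ((continuous_phi01.comp (continuous_const.sub (continuous_NN K)))).mul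
    (continuous_phi01.comp ((continuous_HH.sub continuous_const).div_const δ))

lemma gF_pos {K δ : ℝ} {x : PathR} (hδ : 0 < δ) (h : 0 < gF K δ x) :
    (∀ r, |UniformFun.toFun x r| < K + 1) ∧ δ < HH x := by
  have h1 : 0 < phi01 (K + 1 - NN K x) := by
    rcases (phi01_nonneg (K + 1 - NN K x)).lt_or_eq with h' | h'
    · exact h'
    · exfalso
      rw [gF, ← h', zero_mul] at h
      exact lt_irrefl 0 h
  have h2 : 0 < phi01 ((HH x - δ) / δ) := by
    rcases (phi01_nonneg ((HH x - δ) / δ)).lt_or_eq with h' | h'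
    · exact h'
    · exfalso
      rw [gF, ← h', mul_zero] at h
      exact lt_irrefl 0 h
  constructor
  · have := pos_of_phi01_pos h1
    exact lt_of_NN_lt (by linarith)
  · have := pos_of_phi01_pos h2
    have hpos : 0 < HH x - δ := by
      by_contra hc
      push_neg at hc
      have : (HH x - δ) / δ ≤ 0 := div_nonpos_of_nonpos_of_nonneg hc hδ.le
      linarith
    linarith

lemma gF_eq_one {K δ : ℝ} {x : PathR} (hδ : 0 < δ) (h1 : NN K x ≤ K) (h2 : 2 * δ ≤ HH x) :
    gF K δ x = 1 := by
  unfold gF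
  rw [phi01_eq_one (by linarith), phi01_eq_one (by rw [le_div_iff₀ hδ]; linarith), one_mul]

def fBCF (K δ : ℝ) : BoundedContinuousFunction PathR ℝ :=
  BoundedContinuousFunction.mkOfBound ⟨gF K δ, continuous_gF K δ⟩ 2 (by
    intro x y
    rw [Real.dist_eq]
    have h1 := gF_nonneg K δ x
    have h2 := gF_le_one K δ x
    have h3 := gF_nonneg K δ y
    have h4 := gF_le_one K δ y
    show |gF K δ x - gF K δ y| ≤ 2
    refine abs_le.2 ⟨by linarith, by linarith⟩)

lemma fBCF_apply (K δ : ℝ) (x : PathR) : fBCF K δ x = gF K δ x := rfl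

set_option maxHeartbeats 1600000 in
lemma key_lower {Ω : Type*} (V Z : ℕ → Ω → ℝ) (μ₀ : ℝ)
    (hZ : ∀ t ω, Z t ω = μ₀ + V t ω) (M K δ : ℝ) (hK : 0 ≤ K) (hδ : 0 < δ)
    (n : ℕ) (hn : 1 ≤ n)
    (c2 : 2 * (K + 1) ≤ Real.sqrt n * |μ₀|)
    (c3 : 4 * (K + 1) ≤ δ * n)
    (c4 : M * (64 * (K + 1) ^ 2) < n * μ₀ ^ 2)
    (ω : Ω)
    (hA : ∀ r, |UniformFun.toFun (partialSumProc V n ω) r| < K + 1)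
    (hH : δ < HH (partialSumProc V n ω)) :
    M < Qstat Z n ω := by
  have hn0 : (0:ℝ) < n := by exact_mod_cast hn
  have hsq : 0 < Real.sqrt n := Real.sqrt_pos.2 hn0
  have hnsq : Real.sqrt n * Real.sqrt n = n := Real.mul_self_sqrt hn0.le
  set x := partialSumProc V n ω with hxdef
  set p : ℕ → ℝ := fun k => (∑ t ∈ Finset.Icc 1 k, V t ω) / Real.sqrt n with hp
  have hxapp : ∀ r : Set.Icc (0:ℝ) 1,
      UniformFun.toFun x r = p ⌊(n:ℝ) * (r:ℝ)⌋₊ := fun r => rfl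
  have hfloor_le : ∀ r : ℝ, r ∈ Set.Icc (0:ℝ) 1 → ⌊(n:ℝ) * r⌋₊ ≤ n := by
    intro r hr
    calc ⌊(n:ℝ) * r⌋₊ ≤ ⌊(n:ℝ)⌋₊ := Nat.floor_mono (by nlinarith [hr.1, hr.2])
      _ = n := Nat.floor_natCast n
  have hpk : ∀ k : ℕ, k ≤ n → |p k| < K + 1 := by
    intro k hk
    have hr : (k:ℝ)/n ∈ Set.Icc (0:ℝ) 1 :=
      ⟨by positivity, by rw [div_le_one hn0]; exact_mod_cast hk⟩
    have h := hA ⟨(k:ℝ)/n, hr⟩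
    rw [hxapp ⟨(k:ℝ)/n, hr⟩] at h
    have hmul : (n:ℝ) * ((k:ℝ)/n) = (k:ℝ) := by field_simp
    rw [show ((⟨(k:ℝ)/n, hr⟩ : Set.Icc (0:ℝ) 1) : ℝ) = (k:ℝ)/n from rfl, hmul,
      Nat.floor_natCast] at h
    exact h
  have hx1 : UniformFun.toFun x oneI = p n := by
    rw [hxapp oneI, show ((oneI : Set.Icc (0:ℝ) 1) : ℝ) = 1 from rfl, mul_one,
      Nat.floor_natCast]
  have hcard : ∀ k : ℕ, (Finset.Icc 1 k).card = k := by
    intro k; rw [Nat.card_Icc]; omega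
  have hZmean : sampleMean Z n ω = μ₀ + sampleMean V n ω := by
    unfold sampleMean
    have : ∑ t ∈ Finset.Icc 1 n, Z t ω
        = (n:ℝ) * μ₀ + ∑ t ∈ Finset.Icc 1 n, V t ω := by
      simp only [hZ]
      rw [Finset.sum_add_distrib, Finset.sum_const, hcard, nsmul_eq_mul]
    rw [this, add_div]
    congr 1
    field_simp
  have hVmean : sampleMean V n ω = p n / Real.sqrt n := by
    unfold sampleMean
    rw [hp]
    simp only []
    rw [div_div, hnsq]
  have hcusum : ∀ r : ℝ, r ∈ Set.Icc (0:ℝ) 1 →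
      cusum Z n ω r = p ⌊(n:ℝ)*r⌋₊ - ((⌊(n:ℝ)*r⌋₊ : ℝ)/n) * p n := by
    intro r _
    unfold cusum
    have hsum : ∑ t ∈ Finset.Icc 1 ⌊(n:ℝ)*r⌋₊, (Z t ω - sampleMean Z n ω)
        = (∑ t ∈ Finset.Icc 1 ⌊(n:ℝ)*r⌋₊, V t ω)
          - (⌊(n:ℝ)*r⌋₊ : ℝ) * sampleMean V n ω := by
      have hterm : ∀ t, Z t ω - sampleMean Z n ω = V t ω - sampleMean V n ω := by
        intro t; rw [hZ, hZmean]; ring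
      rw [Finset.sum_congr rfl (fun t _ => hterm t), Finset.sum_sub_distrib,
        Finset.sum_const, hcard, nsmul_eq_mul]
    rw [hsum, sub_div]
    congr 1
    rw [hVmean]
    have : (⌊(n:ℝ)*r⌋₊ : ℝ) * (p n / Real.sqrt n) / Real.sqrt n
        = (⌊(n:ℝ)*r⌋₊ : ℝ) * p n / (Real.sqrt n * Real.sqrt n) := by ring
    rw [this, hnsq]
    ring
  have hcb : ∀ r ∈ Set.Icc (0:ℝ) 1, |cusum Z n ω r| ≤ 2*(K+1) := by
    intro r hr
    rw [hcusum r hr]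
    have h1 := abs_le.1 (hpk _ (hfloor_le r hr)).le
    have h2 : |((⌊(n:ℝ)*r⌋₊ : ℝ)/n) * p n| ≤ K + 1 := by
      rw [abs_mul]
      have hq : |(⌊(n:ℝ)*r⌋₊ : ℝ)/n| ≤ 1 := by
        rw [abs_of_nonneg (by positivity), div_le_one hn0]
        exact_mod_cast hfloor_le r hr
      calc |(⌊(n:ℝ)*r⌋₊ : ℝ)/n| * |p n| ≤ 1 * (K+1) :=
            mul_le_mul hq (hpk n le_rfl).le (abs_nonneg _) one_pos.le
        _ = K + 1 := one_mul _
    have h2' := abs_le.1 h2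
    exact abs_le.2 ⟨by linarith, by linarith⟩
  have himgne : (cusum Z n ω '' Set.Icc (0:ℝ) 1).Nonempty :=
    ⟨_, ⟨0, ⟨le_rfl, by norm_num⟩, rfl⟩⟩
  have hbddA : BddAbove (cusum Z n ω '' Set.Icc (0:ℝ) 1) :=
    ⟨2*(K+1), by rintro y ⟨r, hr, rfl⟩; exact (abs_le.1 (hcb r hr)).2⟩
  have hbddB : BddBelow (cusum Z n ω '' Set.Icc (0:ℝ) 1) :=
    ⟨-(2*(K+1)), by rintro y ⟨r, hr, rfl⟩; exact (abs_le.1 (hcb r hr)).1⟩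
  have hRle : adjRange Z n ω ≤ 4*(K+1) := by
    unfold adjRange
    have h1 : sSup (cusum Z n ω '' Set.Icc (0:ℝ) 1) ≤ 2*(K+1) :=
      csSup_le himgne (by rintro y ⟨r, hr, rfl⟩; exact (abs_le.1 (hcb r hr)).2)
    have h2 : -(2*(K+1)) ≤ sInf (cusum Z n ω '' Set.Icc (0:ℝ) 1) :=
      le_csInf himgne (by rintro y ⟨r, hr, rfl⟩; exact (abs_le.1 (hcb r hr)).1)
    linarith
  have herr : ∀ r : Set.Icc (0:ℝ) 1, |((⌊(n:ℝ)*(r:ℝ)⌋₊ : ℝ)/n) - (r:ℝ)| ≤ 1/n := by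
    intro r
    have h1 : (⌊(n:ℝ)*(r:ℝ)⌋₊ : ℝ) ≤ (n:ℝ)*(r:ℝ) := Nat.floor_le (by nlinarith [r.2.1])
    have h2 : (n:ℝ)*(r:ℝ) < (⌊(n:ℝ)*(r:ℝ)⌋₊ : ℝ) + 1 := Nat.lt_floor_add_one _
    have key1 : (⌊(n:ℝ)*(r:ℝ)⌋₊ : ℝ)/n ≤ (r:ℝ) := by
      rw [div_le_iff₀ hn0]; nlinarith
    have hinv : (1/(n:ℝ))*n = 1 := by field_simp
    have key2 : (r:ℝ) - 1/n ≤ (⌊(n:ℝ)*(r:ℝ)⌋₊ : ℝ)/n := by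
      rw [le_div_iff₀ hn0]; nlinarith
    have hin : 0 < 1/(n:ℝ) := by positivity
    exact abs_le.2 ⟨by linarith, by linarith⟩
  obtain ⟨pp, hpp⟩ := exists_of_lt_HH hH
  have hr1 : (pp.1 : ℝ) ∈ Set.Icc (0:ℝ) 1 := pp.1.2
  have hr2 : (pp.2 : ℝ) ∈ Set.Icc (0:ℝ) 1 := pp.2.2
  have hdiff : cusum Z n ω pp.1 - cusum Z n ω pp.2
      = bdiff x pp
        - ((((⌊(n:ℝ)*(pp.1:ℝ)⌋₊ : ℝ)/n) - (pp.1:ℝ))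
          - (((⌊(n:ℝ)*(pp.2:ℝ)⌋₊ : ℝ)/n) - (pp.2:ℝ))) * p n := by
    rw [hcusum _ hr1, hcusum _ hr2]
    unfold bdiff
    rw [hxapp pp.1, hxapp pp.2, hx1]
    ring
  have herrb : |((((⌊(n:ℝ)*(pp.1:ℝ)⌋₊ : ℝ)/n) - (pp.1:ℝ))
      - (((⌊(n:ℝ)*(pp.2:ℝ)⌋₊ : ℝ)/n) - (pp.2:ℝ))) * p n| ≤ δ/2 := by
    rw [abs_mul]
    have h1 := abs_le.1 (herr pp.1)
    have h2 := abs_le.1 (herr pp.2)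
    have hs : |(((⌊(n:ℝ)*(pp.1:ℝ)⌋₊ : ℝ)/n) - (pp.1:ℝ))
        - (((⌊(n:ℝ)*(pp.2:ℝ)⌋₊ : ℝ)/n) - (pp.2:ℝ))| ≤ 2/n := by
      calc |(((⌊(n:ℝ)*(pp.1:ℝ)⌋₊ : ℝ)/n) - (pp.1:ℝ))
          - (((⌊(n:ℝ)*(pp.2:ℝ)⌋₊ : ℝ)/n) - (pp.2:ℝ))|
          ≤ |(((⌊(n:ℝ)*(pp.1:ℝ)⌋₊ : ℝ)/n) - (pp.1:ℝ))|
            + |(((⌊(n:ℝ)*(pp.2:ℝ)⌋₊ : ℝ)/n) - (pp.2:ℝ))| := abs_sub _ _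
        _ ≤ 1/n + 1/n := add_le_add (herr pp.1) (herr pp.2)
        _ = 2/n := by ring
    calc |(((⌊(n:ℝ)*(pp.1:ℝ)⌋₊ : ℝ)/n) - (pp.1:ℝ))
          - (((⌊(n:ℝ)*(pp.2:ℝ)⌋₊ : ℝ)/n) - (pp.2:ℝ))| * |p n| ≤ (2/n) * (K+1) :=
          mul_le_mul hs (hpk n le_rfl).le (abs_nonneg _) (by positivity)
      _ ≤ δ/2 := by rw [div_mul_eq_mul_div, div_le_div_iff₀ hn0 two_pos]; nlinarith
  have hRge : δ/2 ≤ adjRange Z n ω := by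
    unfold adjRange
    have h1 : cusum Z n ω pp.1 ≤ sSup (cusum Z n ω '' Set.Icc (0:ℝ) 1) :=
      le_csSup hbddA ⟨(pp.1:ℝ), hr1, rfl⟩
    have h2 : sInf (cusum Z n ω '' Set.Icc (0:ℝ) 1) ≤ cusum Z n ω pp.2 :=
      csInf_le hbddB ⟨(pp.2:ℝ), hr2, rfl⟩
    have h3 := abs_le.1 herrb
    have h4 : δ/2 ≤ cusum Z n ω pp.1 - cusum Z n ω pp.2 := by
      rw [hdiff]; linarith
    linarith
  have hVm2 : |sampleMean V n ω| ≤ |μ₀|/2 := by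
    have hVm : |sampleMean V n ω| ≤ (K+1)/Real.sqrt n := by
      rw [hVmean, abs_div, abs_of_nonneg (Real.sqrt_nonneg _)]
      exact (div_le_div_iff_of_pos_right hsq).2 (hpk n le_rfl).le
    refine le_trans hVm ?_
    rw [div_le_div_iff₀ hsq two_pos]
    linarith
  have hZm : μ₀^2/4 ≤ (sampleMean Z n ω)^2 := by
    rw [hZmean]
    have habs : |μ₀|/2 ≤ |μ₀ + sampleMean V n ω| := by
      have t : |μ₀| ≤ |μ₀ + sampleMean V n ω| + |sampleMean V n ω| := by
        calc |μ₀| = |(μ₀ + sampleMean V n ω) + (-(sampleMean V n ω))| := by ring_nf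
          _ ≤ |μ₀ + sampleMean V n ω| + |(-(sampleMean V n ω))| := abs_add_le _ _
          _ = |μ₀ + sampleMean V n ω| + |sampleMean V n ω| := by rw [abs_neg]
      linarith
    calc μ₀^2/4 = (|μ₀|/2)^2 := by rw [div_pow, sq_abs]; norm_num
      _ ≤ |μ₀ + sampleMean V n ω|^2 := pow_le_pow_left₀ (by positivity) habs 2
      _ = (μ₀ + sampleMean V n ω)^2 := sq_abs _
  unfold Qstat
  have hRpos : 0 < adjRange Z n ω := lt_of_lt_of_le (by linarith) hRge
  have hR2pos : 0 < (adjRange Z n ω)^2 := pow_pos hRpos 2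
  have hR2le : (adjRange Z n ω)^2 ≤ 16*(K+1)^2 := by nlinarith
  have hnum : (n:ℝ) * (μ₀^2/4) ≤ (n:ℝ) * (sampleMean Z n ω)^2 :=
    mul_le_mul_of_nonneg_left hZm hn0.le
  have hfrac : ((n:ℝ) * (μ₀^2/4)) / (16*(K+1)^2)
      ≤ (n:ℝ) * (sampleMean Z n ω)^2 / (adjRange Z n ω)^2 :=
    div_le_div₀ (by positivity) hnum hR2pos hR2le
  have hllt : M < ((n:ℝ) * (μ₀^2/4)) / (16*(K+1)^2) := by
    rw [lt_div_iff₀ (by positivity)]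
    nlinarith
  linarith


lemma ofReal_integral_le_meas {Ω : Type*} [MeasurableSpace Ω] (μ : Measure Ω)
    [IsProbabilityMeasure μ] (g : Ω → ℝ) (G : Set Ω)
    (hg1 : ∀ ω, g ω ≤ 1) (hsupp : ∀ ω, 0 < g ω → ω ∈ G) :
    ENNReal.ofReal (∫ ω, g ω ∂μ) ≤ μ G := by
  by_cases hint : Integrable g μ
  · have hle : ∀ ω, g ω ≤ Set.indicator (toMeasurable μ G) (fun _ => (1:ℝ)) ω := by
      intro ω
      by_cases hω : ω ∈ toMeasurable μ G
      · rw [Set.indicator_of_mem hω]; exact hg1 ω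
      · rw [Set.indicator_of_notMem hω]
        by_contra hc
        push_neg at hc
        exact hω (subset_toMeasurable μ G (hsupp ω hc))
    have hind : Integrable (Set.indicator (toMeasurable μ G) fun _ => (1:ℝ)) μ :=
      (integrable_const (1:ℝ)).indicator (measurableSet_toMeasurable μ G)
    have h2 := integral_mono hint hind hle
    rw [integral_indicator_const _ (measurableSet_toMeasurable μ G), smul_eq_mul, mul_one, measureReal_def,
      measure_toMeasurable] at h2
    calc ENNReal.ofReal (∫ ω, g ω ∂μ) ≤ ENNReal.ofReal ((μ G).toReal) :=
          ENNReal.ofReal_le_ofReal h2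
      _ = μ G := ENNReal.ofReal_toReal (measure_ne_top μ G)
  · rw [integral_undef hint]
    simp

lemma meas_eq_zero_of_indepFun {Ω : Type*} [MeasurableSpace Ω] (μ : Measure Ω)
    [IsProbabilityMeasure μ] (D1 D2 : Ω → ℝ) (h1 : Measurable D1) (h2 : Measurable D2)
    (hind : ProbabilityTheory.IndepFun D1 D2 μ)
    (hatom : ∀ x : ℝ, Measure.map D2 μ {x} = 0) :
    μ {ω | D1 ω = D2 ω} = 0 := by
  have hmap : Measure.map (fun ω => (D1 ω, D2 ω)) μ
      = (Measure.map D1 μ).prod (Measure.map D2 μ) :=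
    (ProbabilityTheory.indepFun_iff_map_prod_eq_prod_map_map h1.aemeasurable
      h2.aemeasurable).1 hind
  have hdiag : MeasurableSet {p : ℝ × ℝ | p.1 = p.2} :=
    measurableSet_eq_fun measurable_fst measurable_snd
  have heq : μ {ω | D1 ω = D2 ω}
      = Measure.map (fun ω => (D1 ω, D2 ω)) μ {p : ℝ × ℝ | p.1 = p.2} := by
    rw [Measure.map_apply (h1.prodMk h2) hdiag]
    rfl
  rw [heq, hmap, Measure.prod_apply hdiag]
  have hz : ∀ x : ℝ, (Measure.map D2 μ) (Prod.mk x ⁻¹' {p : ℝ × ℝ | p.1 = p.2}) = 0 := by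
    intro x
    have : Prod.mk x ⁻¹' {p : ℝ × ℝ | p.1 = p.2} = {x} := by
      ext y
      simp [eq_comm]
    rw [this]
    exact hatom x
  rw [lintegral_congr hz, lintegral_zero]

section PathSide

variable {Ω : Type*} [MeasurableSpace Ω]

/-- the path associated to a scaled process -/
def pathI (σ : ℝ) (b : ℝ → Ω → ℝ) (ω : Ω) : PathR :=
  UniformFun.ofFun fun r : Set.Icc (0:ℝ) 1 => σ * b r ω

lemma NN_pathI (σ : ℝ) (b : ℝ → Ω → ℝ) (hbc : ∀ ω, Continuous fun t => b t ω)
    (K : ℝ) (ω : Ω) :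
    NN K (pathI σ b ω) = ⨆ j : ℕ, min |σ * b (eI j) ω| (K + 2) := by
  have hcont : Continuous fun r : Set.Icc (0:ℝ) 1 => min |σ * b r ω| (K + 2) :=
    ((continuous_const.mul ((hbc ω).comp continuous_subtype_val)).abs).min continuous_const
  have h := sSup_image_univ_eq_ciSup eI denseRange_eI _ hcont (K + 2)
    (fun a => min_le_right _ _)
  rw [← h]
  rfl

lemma measurable_NN_pathI (σ : ℝ) (b : ℝ → Ω → ℝ) (hbm : ∀ t, Measurable (b t))
    (hbc : ∀ ω, Continuous fun t => b t ω) (K : ℝ) :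
    Measurable fun ω => NN K (pathI σ b ω) := by
  have : (fun ω => NN K (pathI σ b ω))
      = fun ω => ⨆ j : ℕ, min |σ * b (eI j) ω| (K + 2) :=
    funext fun ω => NN_pathI σ b hbc K ω
  rw [this]
  exact Measurable.iSup fun j => (((hbm _).const_mul σ).abs).min measurable_const

lemma HH_pathI (σ : ℝ) (b : ℝ → Ω → ℝ) (hbc : ∀ ω, Continuous fun t => b t ω) (ω : Ω) :
    HH (pathI σ b ω) = ⨆ j : ℕ × ℕ,
      min ((σ * b (eI j.1) ω - (eI j.1 : ℝ) * (σ * b 1 ω))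
        - (σ * b (eI j.2) ω - (eI j.2 : ℝ) * (σ * b 1 ω))) 1 := by
  have hd : DenseRange (Prod.map eI eI) := denseRange_eI.prodMap denseRange_eI
  have hone : Continuous fun p : (Set.Icc (0:ℝ) 1) × (Set.Icc (0:ℝ) 1) =>
      σ * b ((p.1 : ℝ)) ω :=
    continuous_const.mul ((hbc ω).comp (continuous_subtype_val.comp continuous_fst))
  have htwo : Continuous fun p : (Set.Icc (0:ℝ) 1) × (Set.Icc (0:ℝ) 1) =>
      σ * b ((p.2 : ℝ)) ω :=
    continuous_const.mul ((hbc ω).comp (continuous_subtype_val.comp continuous_snd))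
  have hcont : Continuous fun p : (Set.Icc (0:ℝ) 1) × (Set.Icc (0:ℝ) 1) =>
      min (bdiff (pathI σ b ω) p) 1 := by
    refine Continuous.min ?_ continuous_const
    unfold bdiff pathI
    simp only [UniformFun.toFun_ofFun]
    exact ((hone.sub (((continuous_subtype_val.comp continuous_fst)).mul
        continuous_const)).sub
      (htwo.sub (((continuous_subtype_val.comp continuous_snd)).mul continuous_const)))
  have h := sSup_image_univ_eq_ciSup (Prod.map eI eI) hd _ hcont 1
    (fun a => min_le_right _ _)
  rw [HH, h]
  rfl

lemma measurable_HH_pathI (σ : ℝ) (b : ℝ → Ω → ℝ) (hbm : ∀ t, Measurable (b t))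
    (hbc : ∀ ω, Continuous fun t => b t ω) :
    Measurable fun ω => HH (pathI σ b ω) := by
  have : (fun ω => HH (pathI σ b ω)) = fun ω => ⨆ j : ℕ × ℕ,
      min ((σ * b (eI j.1) ω - (eI j.1 : ℝ) * (σ * b 1 ω))
        - (σ * b (eI j.2) ω - (eI j.2 : ℝ) * (σ * b 1 ω))) 1 :=
    funext fun ω => HH_pathI σ b hbc ω
  rw [this]
  refine Measurable.iSup fun j => Measurable.min ?_ measurable_const
  exact (((hbm _).const_mul σ).sub (((hbm 1).const_mul σ).const_mul _)).sub
    ((((hbm _).const_mul σ)).sub (((hbm 1).const_mul σ).const_mul _))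

end PathSide

set_option maxHeartbeats 1000000 in
lemma bside {Ω : Type*} [MeasurableSpace Ω] (μ : Measure Ω) [IsProbabilityMeasure μ]
    (σ : ℝ) (hσ : 0 < σ) (b : ℝ → Ω → ℝ)
    (hbm : ∀ t, Measurable (b t)) (hbc : ∀ ω, Continuous fun t => b t ω)
    (hb0 : ∀ ω, b 0 ω = 0) (K : ℕ) (δ εr : ℝ) (hδ : 0 < δ) (hδ4 : δ ≤ 1/4) (hεr : 0 ≤ εr)
    (hKtail : μ {ω | (K : ℝ≥0∞) ≤ ⨆ j : ℕ, (‖σ * b (eI j) ω‖₊ : ℝ≥0∞)} ≤ ENNReal.ofReal εr)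
    (hXtail : μ {ω | |b (1/2) ω - (1/2) * b 1 ω| ≤ 2*δ/σ} ≤ ENNReal.ofReal εr) :
    1 - 2*εr ≤ ∫ ω, (fBCF (K:ℝ) δ) (pathI σ b ω) ∂μ := by
  set A1 := {ω | (K : ℝ≥0∞) ≤ ⨆ j : ℕ, (‖σ * b (eI j) ω‖₊ : ℝ≥0∞)} with hA1def
  set A2 := {ω | |b (1/2) ω - (1/2) * b 1 ω| ≤ 2*δ/σ} with hA2def
  have hWm : Measurable fun ω => ⨆ j : ℕ, (‖σ * b (eI j) ω‖₊ : ℝ≥0∞) :=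
    Measurable.iSup fun j => ((hbm _).const_mul σ).nnnorm.coe_nnreal_ennreal
  have hA1m : MeasurableSet A1 := measurableSet_le measurable_const hWm
  have hA2m : MeasurableSet A2 :=
    measurableSet_le ((hbm _).sub ((hbm 1).const_mul (1/2))).abs measurable_const
  have hgm : Measurable fun ω => gF (K:ℝ) δ (pathI σ b ω) := by
    unfold gF
    exact (continuous_phi01.measurable.comp
        (measurable_const.sub (measurable_NN_pathI σ b hbm hbc (K:ℝ)))).mul
      (continuous_phi01.measurable.comp
        (((measurable_HH_pathI σ b hbm hbc).sub measurable_const).div_const δ))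
  have hgint : Integrable (fun ω => gF (K:ℝ) δ (pathI σ b ω)) μ :=
    (integrable_const (1:ℝ)).mono' hgm.aestronglyMeasurable (ae_of_all _ fun ω => by
      rw [Real.norm_eq_abs, abs_of_nonneg (gF_nonneg _ _ _)]
      exact gF_le_one _ _ _)
  have hlow : ∀ ω, (1:ℝ) - A1.indicator (fun _ => (1:ℝ)) ω
      - A2.indicator (fun _ => (1:ℝ)) ω ≤ gF (K:ℝ) δ (pathI σ b ω) := by
    intro ω
    have ind1nonneg : 0 ≤ A1.indicator (fun _ => (1:ℝ)) ω :=
      Set.indicator_nonneg (fun _ _ => zero_le_one) ω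
    have ind2nonneg : 0 ≤ A2.indicator (fun _ => (1:ℝ)) ω :=
      Set.indicator_nonneg (fun _ _ => zero_le_one) ω
    have hgnn := gF_nonneg (K:ℝ) δ (pathI σ b ω)
    by_cases h1 : ω ∈ A1
    · rw [Set.indicator_of_mem h1]
      linarith
    by_cases h2 : ω ∈ A2
    · rw [Set.indicator_of_mem h2]
      linarith
    rw [Set.indicator_of_notMem h1, Set.indicator_of_notMem h2]
    have hNN : NN (K:ℝ) (pathI σ b ω) ≤ (K:ℝ) := by
      have hgood : ∀ j : ℕ, |σ * b (eI j) ω| < (K:ℝ) := by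
        intro j
        have hlt : (‖σ * b (eI j) ω‖₊ : ℝ≥0∞) < ((K:ℕ) : ℝ≥0∞) :=
          lt_of_le_of_lt (le_iSup (fun j => ((‖σ * b (eI j) ω‖₊ : ℝ≥0∞))) j) (not_le.1 h1)
        have h' : ENNReal.ofReal ‖σ * b (eI j) ω‖ < ENNReal.ofReal ((K:ℕ):ℝ) := by
          rw [ofReal_norm, enorm_eq_nnnorm, ENNReal.ofReal_natCast]
          exact hlt
        rw [← Real.norm_eq_abs]
        exact (ENNReal.ofReal_lt_ofReal_iff_of_nonneg (norm_nonneg _)).1 h'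
      have hcl : IsClosed {r : Set.Icc (0:ℝ) 1 | |σ * b r ω| ≤ (K:ℝ)} :=
        isClosed_le
          (continuous_abs.comp (continuous_const.mul ((hbc ω).comp continuous_subtype_val)))
          continuous_const
      have hsub : Set.range eI ⊆ {r : Set.Icc (0:ℝ) 1 | |σ * b r ω| ≤ (K:ℝ)} := by
        rintro _ ⟨j, rfl⟩
        exact (hgood j).le
      have huniv : ∀ r : Set.Icc (0:ℝ) 1, |σ * b r ω| ≤ (K:ℝ) := by
        intro r
        have : (Set.univ : Set (Set.Icc (0:ℝ) 1)) ⊆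
            {r : Set.Icc (0:ℝ) 1 | |σ * b r ω| ≤ (K:ℝ)} := by
          rw [← denseRange_eI.closure_range]
          exact hcl.closure_subset_iff.2 hsub
        exact this (Set.mem_univ r)
      exact NN_le fun r => huniv r
    have hHH : 2*δ ≤ HH (pathI σ b ω) := by
      have hXgt : 2*δ/σ < |b (1/2) ω - (1/2) * b 1 ω| := not_le.1 h2
      have h2δ : 2*δ < |b (1/2) ω - (1/2) * b 1 ω| * σ := (div_lt_iff₀ hσ).1 hXgt
      have h2δ1 : 2*δ ≤ 1 := by linarith
      rcases le_or_gt 0 (b (1/2) ω - (1/2) * b 1 ω) with hpos | hneg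
      · have habs : |b (1/2) ω - (1/2) * b 1 ω| = b (1/2) ω - (1/2) * b 1 ω :=
          abs_of_nonneg hpos
        have hb1 : bdiff (pathI σ b ω) (halfI, zeroI)
            = σ * (b (1/2) ω - (1/2) * b 1 ω) := by
          unfold bdiff pathI
          simp only [UniformFun.toFun_ofFun]
          show (σ * b ((1:ℝ)/2) ω - ((1:ℝ)/2) * (σ * b 1 ω))
              - (σ * b (0:ℝ) ω - (0:ℝ) * (σ * b 1 ω)) = _
          rw [hb0 ω]
          ring
        calc 2*δ ≤ min (σ * (b (1/2) ω - (1/2) * b 1 ω)) 1 := by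
              refine le_min ?_ h2δ1
              rw [habs] at h2δ
              nlinarith
          _ ≤ HH (pathI σ b ω) := by rw [← hb1]; exact min_bdiff_le_HH _ _
      · have habs : |b (1/2) ω - (1/2) * b 1 ω| = -(b (1/2) ω - (1/2) * b 1 ω) :=
          abs_of_neg hneg
        have hb1 : bdiff (pathI σ b ω) (zeroI, halfI)
            = σ * (-(b (1/2) ω - (1/2) * b 1 ω)) := by
          unfold bdiff pathI
          simp only [UniformFun.toFun_ofFun]
          show (σ * b (0:ℝ) ω - (0:ℝ) * (σ * b 1 ω))
              - (σ * b ((1:ℝ)/2) ω - ((1:ℝ)/2) * (σ * b 1 ω)) = _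
          rw [hb0 ω]
          ring
        calc 2*δ ≤ min (σ * (-(b (1/2) ω - (1/2) * b 1 ω))) 1 := by
              refine le_min ?_ h2δ1
              rw [habs] at h2δ
              nlinarith
          _ ≤ HH (pathI σ b ω) := by rw [← hb1]; exact min_bdiff_le_HH _ _
    rw [gF_eq_one hδ hNN hHH]
    norm_num
  have hind1 : Integrable (A1.indicator fun _ => (1:ℝ)) μ :=
    (integrable_const (1:ℝ)).indicator hA1m
  have hind2 : Integrable (A2.indicator fun _ => (1:ℝ)) μ :=
    (integrable_const (1:ℝ)).indicator hA2m
  have hIl : Integrable (fun ω => (1:ℝ) - A1.indicator (fun _ => (1:ℝ)) ω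
      - A2.indicator (fun _ => (1:ℝ)) ω) μ :=
    ((integrable_const (1:ℝ)).sub hind1).sub hind2
  have hmono := integral_mono hIl hgint hlow
  have hcalc : ∫ ω, ((1:ℝ) - A1.indicator (fun _ => (1:ℝ)) ω
      - A2.indicator (fun _ => (1:ℝ)) ω) ∂μ
      = 1 - (μ A1).toReal - (μ A2).toReal := by
    have hIa : Integrable (fun ω => (1:ℝ) - A1.indicator (fun _ => (1:ℝ)) ω) μ :=
      (integrable_const (1:ℝ)).sub hind1
    rw [integral_sub hIa hind2, integral_sub (integrable_const (1:ℝ)) hind1, integral_const,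
      integral_indicator_const _ hA1m, integral_indicator_const _ hA2m]
    simp [measure_univ]; rfl
  rw [hcalc] at hmono
  have hm1 : (μ A1).toReal ≤ εr := ENNReal.toReal_le_of_le_ofReal hεr hKtail
  have hm2 : (μ A2).toReal ≤ εr := ENNReal.toReal_le_of_le_ofReal hεr hXtail
  have hcoe : ∫ ω, (fBCF (K:ℝ) δ) (pathI σ b ω) ∂μ
      = ∫ ω, gF (K:ℝ) δ (pathI σ b ω) ∂μ := rfl
  rw [hcoe]
  linarith

end Stmt8Aux

/-- **Theorem 2(i), fixed-alternative consistency.** If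
`Z_t = μ₀ + V_t` with `μ₀ ≠ 0` and the centered process satisfies the FCLT,
then `Q_n = n Z̄_n² / R_n²` diverges to `∞` in probability. -/
theorem stmt8 [MeasurableSpace Ω] (μ : Measure Ω) [IsProbabilityMeasure μ]
    (Z V : ℕ → Ω → ℝ) (μ₀ : ℝ) (hμ₀ : μ₀ ≠ 0)
    (hZ : ∀ t ω, Z t ω = μ₀ + V t ω)
    (σ : ℝ) (hσ : 0 < σ) (B : ℝ → Ω → ℝ) (hB : IsBrownianMotion μ B)
    (hFCLT : TendstoInDist μ μ (partialSumProc V)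
      (fun ω => UniformFun.ofFun fun r : Set.Icc (0:ℝ) 1 => σ * B r ω)) :
    ∀ M : ℝ, 0 < M →
      Tendsto (fun n => μ {ω | M < Qstat Z n ω}) atTop (𝓝 1) := by
  classical
  intro M hM
  open Stmt8Aux in
  have main : True := trivial
  -- null set of bad paths
  set Nset := toMeasurable μ
    ({ω | ¬ Continuous fun t => B t ω} ∪ {ω | ¬ (B 0 ω = 0)}) with hNdef
  have hNnull : μ Nset = 0 := by
    rw [measure_toMeasurable]
    exact measure_union_null (ae_iff.1 hB.cont) (ae_iff.1 hB.init)
  have hNmeas : MeasurableSet Nset := measurableSet_toMeasurable _ _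
  set Bt : ℝ → Ω → ℝ := fun t ω => if ω ∈ Nset then 0 else B t ω with hBtdef
  have hBtm : ∀ t, Measurable (Bt t) :=
    fun t => Measurable.ite hNmeas measurable_const (hB.meas t)
  have hmemN : ∀ ω, ω ∉ Nset → (Continuous fun t => B t ω) ∧ B 0 ω = 0 := by
    intro ω hω
    constructor
    · by_contra hc; exact hω (subset_toMeasurable _ _ (Or.inl hc))
    · by_contra hc; exact hω (subset_toMeasurable _ _ (Or.inr hc))
  have hBtc : ∀ ω, Continuous fun t => Bt t ω := by
    intro ω
    by_cases hω : ω ∈ Nset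
    · simp only [hBtdef, if_pos hω]; exact continuous_const
    · simp only [hBtdef, if_neg hω]; exact (hmemN ω hω).1
  have hBt0 : ∀ ω, Bt 0 ω = 0 := by
    intro ω
    by_cases hω : ω ∈ Nset
    · simp only [hBtdef, if_pos hω]
    · simp only [hBtdef, if_neg hω]; exact (hmemN ω hω).2
  have hBtae : ∀ᵐ ω ∂μ, ∀ t, Bt t ω = B t ω := by
    rw [ae_iff]
    refine measure_mono_null ?_ hNnull
    intro ω hω
    by_contra hN
    refine hω ?_
    intro t
    simp only [hBtdef, if_neg hN]
  -- the key Gaussian functional is a.s. nonzero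
  have hX0 : μ {ω | B (1/2) ω - (1/2) * B 1 ω = 0} = 0 := by
    have hind : ProbabilityTheory.IndepFun
        (fun ω => B (1/2) ω - B 0 ω) (fun ω => B 1 ω - B (1/2) ω) μ :=
      hB.indep 0 (1/2) (1/2) 1 le_rfl (by norm_num) le_rfl (by norm_num)
    have hmapD2 : Measure.map (fun ω => B 1 ω - B (1/2) ω) μ
        = ProbabilityTheory.gaussianReal 0 (Real.toNNReal (1 - 1/2)) :=
      hB.gauss (1/2) 1 (by norm_num) (by norm_num)
    have hatom : ∀ x : ℝ, Measure.map (fun ω => B 1 ω - B (1/2) ω) μ {x} = 0 := by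
      intro x
      rw [hmapD2]
      have hv : Real.toNNReal (1 - 1/2) ≠ 0 :=
        ne_of_gt (Real.toNNReal_pos.2 (by norm_num))
      exact ProbabilityTheory.gaussianReal_absolutelyContinuous 0 hv Real.volume_singleton
    have hDeq : μ {ω | (fun ω => B (1/2) ω - B 0 ω) ω = (fun ω => B 1 ω - B (1/2) ω) ω} = 0 :=
      meas_eq_zero_of_indepFun μ _ _ ((hB.meas _).sub (hB.meas _))
        ((hB.meas _).sub (hB.meas _)) hind hatom
    have hincl : {ω | B (1/2) ω - (1/2) * B 1 ω = 0}
        ⊆ {ω | (fun ω => B (1/2) ω - B 0 ω) ω = (fun ω => B 1 ω - B (1/2) ω) ω}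
          ∪ {ω | ¬ (B 0 ω = 0)} := by
      intro ω hω
      by_cases h0 : B 0 ω = 0
      · left
        have hset : B (1/2) ω - (1/2) * B 1 ω = 0 := hω
        show B (1/2) ω - B 0 ω = B 1 ω - B (1/2) ω
        rw [h0]
        linarith
      · right; exact h0
    exact measure_mono_null hincl (measure_union_null hDeq (ae_iff.1 hB.init))
  -- tails
  set W : Ω → ℝ≥0∞ := fun ω => ⨆ j : ℕ, (‖σ * Bt (eI j) ω‖₊ : ℝ≥0∞) with hWdef
  have hWm : Measurable W :=
    Measurable.iSup fun j => ((hBtm _).const_mul σ).nnnorm.coe_nnreal_ennreal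
  have hWlt : ∀ ω, W ω < ⊤ := by
    intro ω
    obtain ⟨C, hC⟩ := (isCompact_Icc (a := (0:ℝ)) (b := 1)).exists_bound_of_continuousOn
      ((continuous_const.mul (hBtc ω)).continuousOn)
    refine lt_of_le_of_lt (iSup_le (a := ENNReal.ofReal C) fun j => ?_) ENNReal.ofReal_lt_top
    rw [← enorm_eq_nnnorm, ← ofReal_norm]
    exact ENNReal.ofReal_le_ofReal (hC _ (eI j).2)
  have htailW : Tendsto (fun m : ℕ => μ {ω | (m : ℝ≥0∞) ≤ W ω}) atTop (𝓝 0) := by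
    have hmeasm : ∀ m : ℕ, NullMeasurableSet {ω | (m:ℝ≥0∞) ≤ W ω} μ :=
      fun m => (measurableSet_le measurable_const hWm).nullMeasurableSet
    have hanti : Antitone fun m : ℕ => {ω | (m:ℝ≥0∞) ≤ W ω} := by
      intro m m' hmm' ω hω
      simp only [Set.mem_setOf_eq] at hω ⊢
      exact le_trans (by exact_mod_cast hmm') hω
    have hint : ⋂ m : ℕ, {ω | (m:ℝ≥0∞) ≤ W ω} = ∅ := by
      ext ω
      simp only [Set.mem_iInter, Set.mem_setOf_eq, Set.mem_empty_iff_false, iff_false, not_forall]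
      obtain ⟨m, hm⟩ := ENNReal.exists_nat_gt (hWlt ω).ne
      exact ⟨m, not_le.2 hm⟩
    have h0 := tendsto_measure_iInter_atTop hmeasm hanti ⟨0, measure_ne_top μ _⟩
    rw [hint] at h0
    simpa [Function.comp_def] using h0
  set X : Ω → ℝ := fun ω => B (1/2) ω - (1/2) * B 1 ω with hXdef
  have hXm : Measurable X := (hB.meas _).sub ((hB.meas _).const_mul _)
  have htailX : Tendsto (fun m : ℕ => μ {ω | |X ω| ≤ 1/((m:ℝ)+1)}) atTop (𝓝 0) := by
    have hmeasm : ∀ m : ℕ, NullMeasurableSet {ω | |X ω| ≤ 1/((m:ℝ)+1)} μ :=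
      fun m => (measurableSet_le hXm.abs measurable_const).nullMeasurableSet
    have hanti : Antitone fun m : ℕ => {ω | |X ω| ≤ 1/((m:ℝ)+1)} := by
      intro m m' hmm' ω hω
      simp only [Set.mem_setOf_eq] at hω ⊢
      refine le_trans hω ?_
      have h1 : ((m:ℝ)+1) ≤ ((m':ℝ)+1) := by
        have : (m:ℝ) ≤ m' := Nat.cast_le.2 hmm'
        linarith
      exact one_div_le_one_div_of_le (by positivity) h1
    have hint : ⋂ m : ℕ, {ω | |X ω| ≤ 1/((m:ℝ)+1)} = {ω | X ω = 0} := by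
      ext ω
      simp only [Set.mem_iInter, Set.mem_setOf_eq]
      constructor
      · intro h
        by_contra hc
        obtain ⟨m, hm⟩ := exists_nat_one_div_lt (abs_pos.2 hc)
        exact absurd (h m) (not_le.2 hm)
      · intro h m
        rw [h]
        simp
        positivity
    have h0 := tendsto_measure_iInter_atTop hmeasm hanti ⟨0, measure_ne_top μ _⟩
    rw [hint] at h0
    have : μ {ω | X ω = 0} = 0 := hX0
    rw [this] at h0
    exact h0
  -- main argument
  refine tendsto_order.2 ⟨?_, ?_⟩
  swap
  · intro a ha
    exact Filter.Eventually.of_forall fun n => lt_of_le_of_lt prob_le_one ha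
  intro a ha
  have hatop : a ≠ ⊤ := ha.ne_top
  have hatr : a.toReal < 1 := by
    have h1 := ENNReal.toReal_strict_mono ENNReal.one_ne_top ha
    simpa using h1
  set εr : ℝ := (1 - a.toReal)/4 with hεrdef
  have hεrpos : 0 < εr := by
    have := ENNReal.toReal_nonneg (a := a)
    rw [hεrdef]
    linarith
  have hofpos : (0:ℝ≥0∞) < ENNReal.ofReal εr := ENNReal.ofReal_pos.2 hεrpos
  obtain ⟨K0, hK0⟩ : ∃ m : ℕ, μ {ω | (m:ℝ≥0∞) ≤ W ω} ≤ ENNReal.ofReal εr := by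
    obtain ⟨m, hm⟩ := (htailW.eventually_lt_const hofpos).exists
    exact ⟨m, hm.le⟩
  obtain ⟨m₀, hm₀⟩ : ∃ m : ℕ, μ {ω | |X ω| ≤ 1/((m:ℝ)+1)} ≤ ENNReal.ofReal εr := by
    obtain ⟨m, hm⟩ := (htailX.eventually_lt_const hofpos).exists
    exact ⟨m, hm.le⟩
  set δ : ℝ := min (1/4) (σ/(2*((m₀:ℝ)+1))) with hδdef
  have hδpos : 0 < δ := lt_min (by norm_num) (by positivity)
  have hδ4 : δ ≤ 1/4 := min_le_left _ _
  have hXtail : μ {ω | |Bt (1/2) ω - (1/2) * Bt 1 ω| ≤ 2*δ/σ} ≤ ENNReal.ofReal εr := by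
    have hsub2 : {ω | |Bt (1/2) ω - (1/2) * Bt 1 ω| ≤ 2*δ/σ}
        ⊆ {ω | |X ω| ≤ 1/((m₀:ℝ)+1)} ∪ Nset := by
      intro ω hω
      by_cases hN : ω ∈ Nset
      · right; exact hN
      · left
        have e1 : Bt (1/2) ω = B (1/2) ω := by simp only [hBtdef, if_neg hN]
        have e2 : Bt 1 ω = B 1 ω := by simp only [hBtdef, if_neg hN]
        have hle : |X ω| ≤ 2*δ/σ := by
          rw [hXdef]
          simp only []
          rw [← e1, ← e2]
          exact hω
        refine le_trans hle ?_
        have hδ2 : δ ≤ σ/(2*((m₀:ℝ)+1)) := min_le_right _ _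
        rw [div_le_div_iff₀ hσ (by positivity)]
        have h3 := (le_div_iff₀ (by positivity : (0:ℝ) < 2*((m₀:ℝ)+1))).1 hδ2
        nlinarith
    calc μ {ω | |Bt (1/2) ω - (1/2) * Bt 1 ω| ≤ 2*δ/σ}
        ≤ μ ({ω | |X ω| ≤ 1/((m₀:ℝ)+1)} ∪ Nset) := measure_mono hsub2
      _ ≤ μ {ω | |X ω| ≤ 1/((m₀:ℝ)+1)} + μ Nset := measure_union_le _ _
      _ ≤ ENNReal.ofReal εr := by rw [hNnull, add_zero]; exact hm₀
  have hBint := bside μ σ hσ Bt hBtm hBtc hBt0 K0 δ εr hδpos hδ4 hεrpos.le hK0 hXtail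
  set f := fBCF (K0:ℝ) δ with hfdef
  have hcongr : ∫ ω, f (UniformFun.ofFun fun r : Set.Icc (0:ℝ) 1 => σ * B r ω) ∂μ
      = ∫ ω, f (pathI σ Bt ω) ∂μ := by
    refine integral_congr_ae ?_
    filter_upwards [hBtae] with ω hω
    have hfun : (fun r : Set.Icc (0:ℝ) 1 => σ * B r ω)
        = fun r : Set.Icc (0:ℝ) 1 => σ * Bt r ω :=
      funext fun r => by rw [hω (r:ℝ)]
    unfold pathI
    rw [hfun]
  have hTend := hFCLT f
  rw [hcongr] at hTend
  have hEv : ∀ᶠ n in atTop, 1 - 3*εr < ∫ ω, f (partialSumProc V n ω) ∂μ :=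
    Filter.Tendsto.eventually_const_lt (by linarith) hTend
  have hnat : Tendsto (fun n : ℕ => (n:ℝ)) atTop atTop := tendsto_natCast_atTop_atTop
  have hμpos : 0 < |μ₀| := abs_pos.2 hμ₀
  have hc2 : ∀ᶠ n : ℕ in atTop, 2*((K0:ℝ)+1) ≤ Real.sqrt n * |μ₀| := by
    filter_upwards [hnat.eventually_ge_atTop ((2*((K0:ℝ)+1)/|μ₀|)^2)] with n hn
    have h1 : 2*((K0:ℝ)+1)/|μ₀| ≤ Real.sqrt n := Real.le_sqrt_of_sq_le hn
    rw [div_le_iff₀ hμpos] at h1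
    linarith
  have hc3 : ∀ᶠ n : ℕ in atTop, 4*((K0:ℝ)+1) ≤ δ * n := by
    filter_upwards [hnat.eventually_ge_atTop (4*((K0:ℝ)+1)/δ)] with n hn
    have h1 := (div_le_iff₀ hδpos).1 hn
    linarith
  have hμsq : 0 < μ₀^2 := by nlinarith [sq_abs μ₀]
  have hc4 : ∀ᶠ n : ℕ in atTop, M * (64*((K0:ℝ)+1)^2) < (n:ℝ) * μ₀^2 := by
    filter_upwards [hnat.eventually_gt_atTop (M * (64*((K0:ℝ)+1)^2)/μ₀^2)] with n hn
    rw [div_lt_iff₀ hμsq] at hn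
    linarith
  filter_upwards [hEv, eventually_ge_atTop 1, hc2, hc3, hc4] with n hEvn hn1 hn2 hn3 hn4
  have hgood : ∀ ω, 0 < f (partialSumProc V n ω) → ω ∈ {ω | M < Qstat Z n ω} := by
    intro ω hpos
    have hpos' : 0 < gF (K0:ℝ) δ (partialSumProc V n ω) := hpos
    obtain ⟨hA, hH⟩ := gF_pos hδpos hpos'
    exact key_lower V Z μ₀ hZ M (K0:ℝ) δ (Nat.cast_nonneg K0) hδpos n hn1 hn2 hn3 hn4 ω hA hH
  have hbound := ofReal_integral_le_meas μ (fun ω => f (partialSumProc V n ω))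
    {ω | M < Qstat Z n ω} (fun ω => gF_le_one _ _ _) hgood
  have ha3 : a.toReal < 1 - 3*εr := by rw [hεrdef]; linarith
  have hpos3 : (0:ℝ) < 1 - 3*εr := by
    have := ENNReal.toReal_nonneg (a := a)
    linarith
  have h5 : a < ENNReal.ofReal (1 - 3*εr) := by
    rw [← ENNReal.ofReal_toReal hatop]
    exact (ENNReal.ofReal_lt_ofReal_iff hpos3).2 ha3
  exact lt_of_lt_of_le h5 (le_trans (ENNReal.ofReal_le_ofReal hEvn.le) hbound)
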